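/- Let $C_1, C_2$ be symmetric positive definite operators on a finite-dimensional real inner product space, $\eta_1, \eta_2 > 0$, and suppose $C_1 C_2 = C_2 C_1$. Set $B_1 = \eta_2 C_1^{-1} + (\eta_1 + \eta_2) C_2^{-1}$, $B_2 = \eta_1 \eta_2 C_2^{-1} C_1^{-1}$, $E = B_2^{-1/2} B_1 B_2^{-1/2}$, and $F = B_2^{-1}$. Then $\frac{1}{4}E^2 - F$ is symmetric and positive definite. -/

import Mathlib

open scoped RealInnerProductSpace

set_option synthInstance.maxHeartbeats 1000000 in
set_option maxHeartbeats 1000000 in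
/-- For commuting symmetric positive definite `C₁, C₂` and `η₁, η₂ > 0`, with
`B₁ = η₂C₁⁻¹ + (η₁+η₂)C₂⁻¹`, `B₂ = η₁η₂C₂⁻¹C₁⁻¹`, `E = B₂^{-1/2} B₁ B₂^{-1/2}`,
`F = B₂⁻¹`, the operator `¼E² - F` is symmetric and positive definite. -/
theorem stmt_19 {V : Type*} [NormedAddCommGroup V] [InnerProductSpace ℝ V]
    [FiniteDimensional ℝ V]
    (η1 η2 : ℝ) (hη1 : 0 < η1) (hη2 : 0 < η2)
    (C1 C2 C1i C2i S F B1 B2 E : V →L[ℝ] V)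
    (hC1sym : ∀ x y : V, ⟪C1 x, y⟫ = ⟪x, C1 y⟫)
    (hC2sym : ∀ x y : V, ⟪C2 x, y⟫ = ⟪x, C2 y⟫)
    (hC1pos : ∀ x : V, x ≠ 0 → 0 < ⟪C1 x, x⟫)
    (hC2pos : ∀ x : V, x ≠ 0 → 0 < ⟪C2 x, x⟫)
    (hcomm : C1 * C2 = C2 * C1)
    (hC1i : C1 * C1i = 1 ∧ C1i * C1 = 1)
    (hC2i : C2 * C2i = 1 ∧ C2i * C2 = 1)
    (hB1 : B1 = η2 • C1i + (η1 + η2) • C2i)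
    (hB2 : B2 = (η1 * η2) • (C2i * C1i))
    -- `S` is the inverse of the positive square root of `B₂`,
    -- i.e. `S = B₂^{-1/2}`: self-adjoint, positive definite, `S² B₂ = 1`.
    (hSsym : ∀ x y : V, ⟪S x, y⟫ = ⟪x, S y⟫)
    (hSpos : ∀ x : V, x ≠ 0 → 0 < ⟪S x, x⟫)
    (hS : S * S * B2 = 1)
    (hF : F * B2 = 1 ∧ B2 * F = 1)
    (hE : E = S * B1 * S) :
    (∀ x y : V, ⟪((1 / 4 : ℝ) • (E * E) - F) x, y⟫ =
        ⟪x, ((1 / 4 : ℝ) • (E * E) - F) y⟫) ∧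
    ∀ x : V, x ≠ 0 → 0 < ⟪((1 / 4 : ℝ) • (E * E) - F) x, x⟫ := by
  obtain ⟨hC1i1, hC1i2⟩ := hC1i
  obtain ⟨hC2i1, hC2i2⟩ := hC2i
  obtain ⟨hF1, hF2⟩ := hF
  have hη12 : (0:ℝ) < η1 * η2 := mul_pos hη1 hη2
  -- pointwise versions of the inverse identities
  have hc1 : ∀ z, C1 (C1i z) = z := fun z => by
    have := congrArg (fun T : V →L[ℝ] V => T z) hC1i1; simpa using this
  have hc2 : ∀ z, C2 (C2i z) = z := fun z => by
    have := congrArg (fun T : V →L[ℝ] V => T z) hC2i1; simpa using this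
  -- C1i and C2i commute
  have h1 : (C2i * C1i) * (C1 * C2) = 1 := by
    rw [mul_assoc, ← mul_assoc C1i, hC1i2, one_mul, hC2i2]
  have h3 : (C1 * C2) * (C1i * C2i) = 1 := by
    rw [hcomm, mul_assoc, ← mul_assoc C1, hC1i1, one_mul, hC2i1]
  have hicomm : C1i * C2i = C2i * C1i := by
    calc C1i * C2i = ((C2i * C1i) * (C1 * C2)) * (C1i * C2i) := by rw [h1, one_mul]
      _ = (C2i * C1i) * ((C1 * C2) * (C1i * C2i)) := by rw [mul_assoc]
      _ = C2i * C1i := by rw [h3, mul_one]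
  -- the value of F
  have hFval : F = (η1 * η2)⁻¹ • (C1 * C2) := by
    have hG : B2 * ((η1 * η2)⁻¹ • (C1 * C2)) = 1 := by
      rw [hB2, smul_mul_assoc, mul_smul_comm, smul_smul, mul_inv_cancel₀ hη12.ne',
        one_smul, h1]
    calc F = F * (B2 * ((η1 * η2)⁻¹ • (C1 * C2))) := by rw [hG, mul_one]
      _ = (F * B2) * ((η1 * η2)⁻¹ • (C1 * C2)) := by rw [mul_assoc]
      _ = (η1 * η2)⁻¹ • (C1 * C2) := by rw [hF1, one_mul]
  -- F commutes with C1i and C2i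
  have l1 : C1 * C2 * C1i = C2 := by rw [hcomm, mul_assoc, hC1i1, mul_one]
  have r1 : C1i * (C1 * C2) = C2 := by rw [← mul_assoc, hC1i2, one_mul]
  have l2 : C1 * C2 * C2i = C1 := by rw [mul_assoc, hC2i1, mul_one]
  have r2 : C2i * (C1 * C2) = C1 := by rw [hcomm, ← mul_assoc, hC2i2, one_mul]
  have hFC1i : F * C1i = C1i * F := by
    rw [hFval, smul_mul_assoc, mul_smul_comm, l1, r1]
  have hFC2i : F * C2i = C2i * F := by
    rw [hFval, smul_mul_assoc, mul_smul_comm, l2, r2]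
  set D : V →L[ℝ] V := η2 • C1i - (η1 - η2) • C2i with hD
  set A : V →L[ℝ] V := (1/4 : ℝ) • (D * D) + (η1 * η2) • (C2i * C2i) with hA
  have hSS : S * S = F := by
    calc S * S = (S * S) * (B2 * F) := by rw [hF2, mul_one]
      _ = (S * S * B2) * F := by noncomm_ring
      _ = F := by rw [hS, one_mul]
  have hFB1 : F * B1 = B1 * F := by
    rw [hB1]
    simp only [mul_add, add_mul, mul_smul_comm, smul_mul_assoc]
    rw [hFC1i, hFC2i]
  have hFD : F * D = D * F := by
    rw [hD]
    simp only [mul_sub, sub_mul, mul_smul_comm, smul_mul_assoc]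
    rw [hFC1i, hFC2i]
  have hFDD : F * (D * D) = D * D * F := by
    calc F * (D * D) = (F * D) * D := (mul_assoc F D D).symm
      _ = (D * F) * D := by rw [hFD]
      _ = D * (F * D) := mul_assoc D F D
      _ = D * (D * F) := by rw [hFD]
      _ = D * D * F := (mul_assoc D D F).symm
  have hFCC : F * (C2i * C2i) = C2i * C2i * F := by
    calc F * (C2i * C2i) = (F * C2i) * C2i := (mul_assoc F C2i C2i).symm
      _ = (C2i * F) * C2i := by rw [hFC2i]
      _ = C2i * (F * C2i) := mul_assoc C2i F C2i
      _ = C2i * (C2i * F) := by rw [hFC2i]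
      _ = C2i * C2i * F := (mul_assoc C2i C2i F).symm
  have hFA : F * A = A * F := by
    rw [hA]
    simp only [mul_add, add_mul, mul_smul_comm, smul_mul_assoc]
    rw [hFDD, hFCC]
  -- the main algebraic identity: ¼B₁² = B₂ + A
  have hB1sq : (1/4 : ℝ) • (B1 * B1) = B2 + A := by
    rw [hB1, hB2, hA, hD]
    simp only [mul_add, add_mul, mul_sub, sub_mul, smul_mul_assoc, mul_smul_comm,
      smul_smul, smul_add, smul_sub]
    rw [hicomm]
    module
  -- key factorization
  have key : (1/4 : ℝ) • (E * E) - F = S * ((A * F) * S) := by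
    have e1 : E * E = S * ((B1 * (F * B1)) * S) := by
      rw [hE, ← hSS]; noncomm_ring
    have e2 : B1 * (F * B1) = F * (B1 * B1) := by
      rw [← mul_assoc, ← hFB1, mul_assoc]
    have e3 : (1/4 : ℝ) • (E * E) = S * ((F * ((1/4 : ℝ) • (B1 * B1))) * S) := by
      rw [e1, e2]
      simp only [smul_mul_assoc, mul_smul_comm]
    rw [e3, hB1sq, mul_add, hF1, hFA, add_mul, one_mul, mul_add, hSS]
    abel
  -- symmetry facts
  have hC1isym : ∀ x y : V, ⟪C1i x, y⟫ = ⟪x, C1i y⟫ := by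
    intro x y
    conv_lhs => rw [← hc1 y]
    rw [← hC1sym (C1i x) (C1i y), hc1]
  have hC2isym : ∀ x y : V, ⟪C2i x, y⟫ = ⟪x, C2i y⟫ := by
    intro x y
    conv_lhs => rw [← hc2 y]
    rw [← hC2sym (C2i x) (C2i y), hc2]
  have hDsym : ∀ x y : V, ⟪D x, y⟫ = ⟪x, D y⟫ := by
    intro x y
    simp only [hD, ContinuousLinearMap.sub_apply, ContinuousLinearMap.smul_apply,
      inner_sub_left, inner_sub_right, real_inner_smul_left, real_inner_smul_right,
      hC1isym, hC2isym]
  have hB1sym : ∀ x y : V, ⟪B1 x, y⟫ = ⟪x, B1 y⟫ := by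
    intro x y
    simp only [hB1, ContinuousLinearMap.add_apply, ContinuousLinearMap.smul_apply,
      inner_add_left, inner_add_right, real_inner_smul_left, real_inner_smul_right,
      hC1isym, hC2isym]
  have hEsym : ∀ x y : V, ⟪E x, y⟫ = ⟪x, E y⟫ := by
    intro x y
    rw [hE]
    simp only [ContinuousLinearMap.mul_apply]
    rw [hSsym (B1 (S x)) y, hB1sym (S x) (S y), hSsym x (B1 (S y))]
  have hfx : ∀ z, F z = S (S z) := fun z => by
    have := congrArg (fun T : V →L[ℝ] V => T z) hSS; simpa using this.symm
  have hFsym : ∀ x y : V, ⟪F x, y⟫ = ⟪x, F y⟫ := by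
    intro x y
    rw [hfx x, hfx y, hSsym (S x) y, hSsym x (S y)]
  -- injectivity facts
  have hSinj : ∀ z : V, z ≠ 0 → S z ≠ 0 := by
    intro z hz h
    have := hSpos z hz
    rw [h] at this
    simp at this
  have hC2iinj : ∀ z : V, z ≠ 0 → C2i z ≠ 0 := by
    intro z hz h
    apply hz
    rw [← hc2 z, h, map_zero]
  constructor
  · intro x y
    simp only [ContinuousLinearMap.sub_apply, ContinuousLinearMap.smul_apply,
      ContinuousLinearMap.mul_apply, inner_sub_left, inner_sub_right,
      real_inner_smul_left, real_inner_smul_right]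
    rw [hEsym (E x) y, hEsym x (E y), hFsym x y]
  · intro x hx
    rw [key]
    have hDF : ∀ z, D (F z) = F (D z) := fun z => by
      have := congrArg (fun T : V →L[ℝ] V => T z) hFD
      simpa [ContinuousLinearMap.mul_apply] using this.symm
    have hC2iF : ∀ z, C2i (F z) = F (C2i z) := fun z => by
      have := congrArg (fun T : V →L[ℝ] V => T z) hFC2i
      simpa [ContinuousLinearMap.mul_apply] using this.symm
    set u := S x with hu
    have hun : u ≠ 0 := hSinj x hx
    have expand : ((S * ((A * F) * S)) x) = S (A (F u)) := by
      simp [ContinuousLinearMap.mul_apply]; rfl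
    rw [expand, hSsym (A (F u)) x, ← hu]
    have hAval : A (F u) = (1/4 : ℝ) • D (D (F u)) + (η1 * η2) • C2i (C2i (F u)) := by
      simp [hA, ContinuousLinearMap.mul_apply]
    rw [hAval, inner_add_left, real_inner_smul_left, real_inner_smul_left]
    have t1 : ⟪D (D (F u)), u⟫ = ⟪S (D u), S (D u)⟫ := by
      calc ⟪D (D (F u)), u⟫ = ⟪D (F u), D u⟫ := hDsym (D (F u)) u
        _ = ⟪F (D u), D u⟫ := by rw [hDF]
        _ = ⟪S (D u), S (D u)⟫ := by rw [hfx (D u)]; exact hSsym (S (D u)) (D u)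
    have t2 : ⟪C2i (C2i (F u)), u⟫ = ⟪S (C2i u), S (C2i u)⟫ := by
      calc ⟪C2i (C2i (F u)), u⟫ = ⟪C2i (F u), C2i u⟫ := hC2isym (C2i (F u)) u
        _ = ⟪F (C2i u), C2i u⟫ := by rw [hC2iF]
        _ = ⟪S (C2i u), S (C2i u)⟫ := by
            rw [hfx (C2i u)]; exact hSsym (S (C2i u)) (C2i u)
    rw [t1, t2]
    have p1 : (0:ℝ) ≤ ⟪S (D u), S (D u)⟫ := real_inner_self_nonneg
    have p2 : (0:ℝ) < ⟪S (C2i u), S (C2i u)⟫ := by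
      have hne : S (C2i u) ≠ 0 := hSinj _ (hC2iinj _ hun)
      refine lt_of_le_of_ne real_inner_self_nonneg fun h => hne ?_
      exact inner_self_eq_zero.mp h.symm
    have : (0:ℝ) < (η1 * η2) * ⟪S (C2i u), S (C2i u)⟫ := mul_pos hη12 p2
    nlinarith
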